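/- For the Markovian wait-then-jump first-return-time density P_M^{wj}(t) = e^{-t/2}[I₀(ζ) − I₀'(ζ)]_{ζ=t/2} − e^{-t}, it holds that P_M^{wj}(0) = 0 and P_M^{wj}(t) ≥ 0 for all t ≥ 0. -/

import Mathlib

open Real

noncomputable def besselI0 (ζ : ℝ) : ℝ := ∑' j : ℕ, (ζ ^ 2 / 4) ^ j / ((Nat.factorial j : ℝ)) ^ 2

noncomputable def PMwj (t : ℝ) : ℝ :=
  Real.exp (-t / 2) * (besselI0 (t / 2) - deriv besselI0 (t / 2)) - Real.exp (-t)

noncomputable def cc (j : ℕ) : ℝ := ((4:ℝ)^j * (Nat.factorial j : ℝ)^2)⁻¹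

lemma cc_pos (j : ℕ) : 0 < cc j := by
  have h : (0:ℝ) < (Nat.factorial j : ℝ) := by exact_mod_cast Nat.factorial_pos j
  rw [cc]
  positivity

noncomputable def f0 (j : ℕ) (x : ℝ) : ℝ := cc j * x ^ (2*j)
noncomputable def f1 (j : ℕ) (x : ℝ) : ℝ := cc j * ((2*j : ℕ) * x ^ (2*j - 1))
noncomputable def f2 (j : ℕ) (x : ℝ) : ℝ :=
  cc j * ((2*j : ℕ) * (((2*j - 1 : ℕ) : ℝ) * x ^ (2*j - 1 - 1)))

lemma hasDerivAt_f0 (j : ℕ) (x : ℝ) : HasDerivAt (f0 j) (f1 j x) x :=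
  (hasDerivAt_pow (2*j) x).const_mul (cc j)

lemma hasDerivAt_f1 (j : ℕ) (x : ℝ) : HasDerivAt (f1 j) (f2 j x) x :=
  ((hasDerivAt_pow (2*j - 1) x).const_mul ((2*j : ℕ) : ℝ)).const_mul (cc j)

noncomputable def MM (R : ℝ) (j : ℕ) : ℝ := 4 * (R^2)^j / (Nat.factorial j : ℝ)

lemma summable_MM (R : ℝ) : Summable (MM R) := by
  unfold MM
  simp_rw [mul_div_assoc]
  exact (Real.summable_pow_div_factorial (R^2)).mul_left 4

lemma sq_le_four_pow (j : ℕ) : ((j:ℝ)+1)^2 ≤ 4^j := by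
  induction j with
  | zero => norm_num
  | succ n ih =>
    have h4 : (0:ℝ) < 4 ^ n := by positivity
    push_cast
    calc ((n:ℝ)+1+1)^2 ≤ 4*((n:ℝ)+1)^2 := by nlinarith [Nat.cast_nonneg (α := ℝ) n]
    _ ≤ 4 * 4^n := by nlinarith
    _ = 4^(n+1) := by ring

lemma hb (j : ℕ) {x R : ℝ} (hx : |x| ≤ R) (hR : 1 ≤ R) {a : ℝ} {k : ℕ}
    (ha : 0 ≤ a) (ha2 : a ≤ (2*(j:ℝ)+2)*(2*(j:ℝ)+1)) (hk : k ≤ 2*j) :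
    cc j * (a * |x| ^ k) ≤ MM R j := by
  have hR0 : (0:ℝ) ≤ R := le_trans zero_le_one hR
  have hxk : |x| ^ k ≤ R ^ (2*j) :=
    le_trans (pow_le_pow_left₀ (abs_nonneg x) hx k) (pow_le_pow_right₀ hR hk)
  have h1 : cc j * (a * |x| ^ k) ≤ cc j * ((2*(j:ℝ)+2)*(2*(j:ℝ)+1)) * R ^ (2*j) := by
    rw [mul_assoc (cc j)]
    refine mul_le_mul_of_nonneg_left ?_ (cc_pos j).le
    exact mul_le_mul ha2 hxk (pow_nonneg (abs_nonneg x) k)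
      (by positivity)
  refine le_trans h1 ?_
  -- key coefficient bound
  have hfac : (1:ℝ) ≤ (Nat.factorial j : ℝ) := by exact_mod_cast Nat.one_le_iff_ne_zero.mpr (Nat.factorial_pos j).ne'
  have h4 : (0:ℝ) < 4 ^ j := by positivity
  have hsq := sq_le_four_pow j
  have hcoef : cc j * ((2*(j:ℝ)+2)*(2*(j:ℝ)+1)) ≤ 4 / (Nat.factorial j : ℝ) := by
    rw [cc, inv_mul_eq_div, div_le_div_iff₀ (by positivity) (by linarith)]
    have h2 : (2*(j:ℝ)+2)*(2*(j:ℝ)+1) ≤ 4*((j:ℝ)+1)^2 := by nlinarith [Nat.cast_nonneg (α := ℝ) j]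
    nlinarith [Nat.cast_nonneg (α := ℝ) j, sq_nonneg ((Nat.factorial j : ℝ) - 1)]
  calc cc j * ((2*(j:ℝ)+2)*(2*(j:ℝ)+1)) * R ^ (2*j)
      ≤ (4 / (Nat.factorial j : ℝ)) * R ^ (2*j) := by
        exact mul_le_mul_of_nonneg_right hcoef (by positivity)
    _ = MM R j := by rw [MM, pow_mul]; ring

lemma bound0 (j : ℕ) {x R : ℝ} (hx : |x| ≤ R) (hR : 1 ≤ R) : ‖f0 j x‖ ≤ MM R j := by
  have : ‖f0 j x‖ = cc j * (1 * |x| ^ (2*j)) := by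
    rw [f0, norm_mul, norm_pow, Real.norm_eq_abs, Real.norm_eq_abs, abs_of_pos (cc_pos j), one_mul]
  rw [this]
  exact hb j hx hR zero_le_one (by nlinarith [Nat.cast_nonneg (α := ℝ) j]) le_rfl

lemma bound1 (j : ℕ) {x R : ℝ} (hx : |x| ≤ R) (hR : 1 ≤ R) : ‖f1 j x‖ ≤ MM R j := by
  have : ‖f1 j x‖ = cc j * (((2*j : ℕ) : ℝ) * |x| ^ (2*j - 1)) := by
    rw [f1, norm_mul, norm_mul, norm_pow, Real.norm_eq_abs, Real.norm_eq_abs, Real.norm_eq_abs,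
      abs_of_pos (cc_pos j), Nat.abs_cast]
  rw [this]
  exact hb j hx hR (by positivity) (by push_cast; nlinarith [Nat.cast_nonneg (α := ℝ) j])
    (Nat.sub_le _ _)

lemma bound2 (j : ℕ) {x R : ℝ} (hx : |x| ≤ R) (hR : 1 ≤ R) : ‖f2 j x‖ ≤ MM R j := by
  have : ‖f2 j x‖ = cc j * ((((2*j : ℕ) : ℝ) * ((2*j - 1 : ℕ) : ℝ)) * |x| ^ (2*j - 1 - 1)) := by
    rw [f2, norm_mul, norm_mul, norm_mul, norm_pow, Real.norm_eq_abs, Real.norm_eq_abs,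
      Real.norm_eq_abs, Real.norm_eq_abs, abs_of_pos (cc_pos j), Nat.abs_cast, Nat.abs_cast,
      mul_assoc]
  rw [this]
  have hle : ((2*j - 1 : ℕ) : ℝ) ≤ 2*(j:ℝ)+1 := by
    have : (2*j - 1 : ℕ) ≤ 2*j + 1 := by omega
    exact_mod_cast le_trans (Nat.cast_le.mpr this) (by push_cast; linarith)
  refine hb j hx hR (by positivity) ?_ (le_trans (Nat.sub_le _ _) (Nat.sub_le _ _))
  push_cast
  have h1 : ((2*j - 1 : ℕ) : ℝ) ≥ 0 := Nat.cast_nonneg _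
  nlinarith [Nat.cast_nonneg (α := ℝ) j]

noncomputable def F0 (x : ℝ) : ℝ := ∑' j, f0 j x
noncomputable def F1 (x : ℝ) : ℝ := ∑' j, f1 j x
noncomputable def F2 (x : ℝ) : ℝ := ∑' j, f2 j x

lemma summable_f0 (x : ℝ) : Summable (fun j => f0 j x) :=
  (summable_MM (max 1 |x|)).of_norm_bounded (fun j => bound0 j (le_max_right _ _) (le_max_left _ _))

lemma summable_f1 (x : ℝ) : Summable (fun j => f1 j x) :=
  (summable_MM (max 1 |x|)).of_norm_bounded (fun j => bound1 j (le_max_right _ _) (le_max_left _ _))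

lemma summable_f2 (x : ℝ) : Summable (fun j => f2 j x) :=
  (summable_MM (max 1 |x|)).of_norm_bounded (fun j => bound2 j (le_max_right _ _) (le_max_left _ _))

lemma mem_ball_bound {y x : ℝ} (hy : y ∈ Metric.ball (0:ℝ) (|x| + 2)) :
    |y| ≤ |x| + 2 ∧ (1:ℝ) ≤ |x| + 2 := by
  rw [Metric.mem_ball, Real.dist_eq, sub_zero] at hy
  constructor
  · linarith
  · nlinarith [abs_nonneg x]

lemma hasDerivAt_F0 (x : ℝ) : HasDerivAt F0 (F1 x) x := by
  have h := hasDerivAt_tsum_of_isPreconnected (summable_MM (|x| + 2))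
    (Metric.isOpen_ball) ((convex_ball (0:ℝ) (|x| + 2)).isPreconnected)
    (fun j y _ => hasDerivAt_f0 j y)
    (fun j y hy => bound1 j (mem_ball_bound hy).1 (mem_ball_bound hy).2)
    (y₀ := x) (by rw [Metric.mem_ball, Real.dist_eq, sub_zero]; linarith)
    (summable_f0 x) (y := x) (by rw [Metric.mem_ball, Real.dist_eq, sub_zero]; linarith)
  exact h

lemma hasDerivAt_F1 (x : ℝ) : HasDerivAt F1 (F2 x) x := by
  have h := hasDerivAt_tsum_of_isPreconnected (summable_MM (|x| + 2))
    (Metric.isOpen_ball) ((convex_ball (0:ℝ) (|x| + 2)).isPreconnected)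
    (fun j y _ => hasDerivAt_f1 j y)
    (fun j y hy => bound2 j (mem_ball_bound hy).1 (mem_ball_bound hy).2)
    (y₀ := x) (by rw [Metric.mem_ball, Real.dist_eq, sub_zero]; linarith)
    (summable_f1 x) (y := x) (by rw [Metric.mem_ball, Real.dist_eq, sub_zero]; linarith)
  exact h

lemma besselI0_eq_F0 : besselI0 = F0 := by
  funext x
  rw [besselI0, F0]
  refine tsum_congr fun j => ?_
  rw [f0, cc, div_pow, div_eq_mul_inv, ← pow_mul, mul_comm, mul_inv]
  ring_nf

lemma F0_zero : F0 0 = 1 := by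
  rw [F0, tsum_eq_single 0 (fun j hj => by
    rw [f0, zero_pow (by omega : 2*j ≠ 0), mul_zero])]
  simp [f0, cc]

lemma F1_zero : F1 0 = 0 := by
  have h : ∀ j : ℕ, f1 j 0 = 0 := by
    intro j
    cases j with
    | zero => simp [f1]
    | succ n =>
      rw [f1, zero_pow (by omega : 2*(n+1) - 1 ≠ 0), mul_zero, mul_zero]
  rw [F1]
  simp [h]

lemma coef_step (j : ℕ) : cc (j+1) * ((2*(j:ℝ)+2)*(2*(j:ℝ)+1)) ≤ cc j := by
  have hf : (0:ℝ) < (Nat.factorial j : ℝ) := by exact_mod_cast Nat.factorial_pos j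
  have h4 : (0:ℝ) < 4 ^ j := by positivity
  have hid : cc (j+1) * ((2*(j:ℝ)+2)*(2*(j:ℝ)+1)) = cc j * ((2*(j:ℝ)+1)/(2*(j:ℝ)+2)) := by
    rw [cc, cc, Nat.factorial_succ, pow_succ]
    push_cast
    field_simp
    ring
  rw [hid]
  have : (2*(j:ℝ)+1)/(2*(j:ℝ)+2) ≤ 1 := by
    rw [div_le_one (by positivity)]
    linarith
  nlinarith [cc_pos j]

lemma F2_shift (x : ℝ) : F2 x = ∑' j, cc (j+1) * ((2*(j:ℝ)+2)*(2*(j:ℝ)+1)) * x^(2*j) := by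
  rw [F2, Summable.tsum_eq_zero_add (summable_f2 x)]
  have h0 : f2 0 x = 0 := by simp [f2]
  rw [h0, zero_add]
  refine tsum_congr fun j => ?_
  rw [f2]
  have e1 : 2*(j+1) - 1 - 1 = 2*j := by omega
  have e2 : (2*(j+1) : ℕ) = 2*j+2 := by omega
  have e3 : (2*(j+1) - 1 : ℕ) = 2*j+1 := by omega
  rw [e1, e2]
  have e4 : (2*j+2 - 1 : ℕ) = 2*j+1 := by omega
  rw [e4]
  push_cast
  ring

lemma summable_shift (x : ℝ) :
    Summable (fun j => cc (j+1) * ((2*(j:ℝ)+2)*(2*(j:ℝ)+1)) * x^(2*j)) := by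
  have h := (summable_nat_add_iff 1).mpr (summable_f2 x)
  refine h.congr fun j => ?_
  rw [f2]
  have e1 : 2*(j+1) - 1 - 1 = 2*j := by omega
  have e2 : (2*(j+1) : ℕ) = 2*j+2 := by omega
  have e3 : (2*(j+1) - 1 : ℕ) = 2*j+1 := by omega
  rw [e1, e2]
  have e4 : (2*j+2 - 1 : ℕ) = 2*j+1 := by omega
  rw [e4]
  push_cast
  ring

lemma F0_sub_F2_nonneg (x : ℝ) : 0 ≤ F0 x - F2 x := by
  rw [F2_shift, F0, ← Summable.tsum_sub (summable_f0 x) (summable_shift x)]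
  refine tsum_nonneg fun j => ?_
  have hx : 0 ≤ x^(2*j) := by rw [pow_mul]; positivity
  have h := coef_step j
  rw [f0]
  nlinarith

noncomputable def hh (x : ℝ) : ℝ := Real.exp x * (F0 x - F1 x)

lemma hasDerivAt_hh (x : ℝ) : HasDerivAt hh (Real.exp x * (F0 x - F2 x)) x := by
  have h := (Real.hasDerivAt_exp x).mul ((hasDerivAt_F0 x).sub (hasDerivAt_F1 x))
  exact h.congr_deriv (by simp only [Pi.sub_apply]; ring)

lemma hh_mono : Monotone hh := by
  refine monotone_of_deriv_nonneg (fun x => (hasDerivAt_hh x).differentiableAt) fun x => ?_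
  rw [(hasDerivAt_hh x).deriv]
  exact mul_nonneg (Real.exp_pos x).le (F0_sub_F2_nonneg x)

lemma deriv_besselI0 (y : ℝ) : deriv besselI0 y = F1 y := by
  rw [besselI0_eq_F0]
  exact (hasDerivAt_F0 y).deriv

theorem PMwj_properties : PMwj 0 = 0 ∧ ∀ t : ℝ, 0 ≤ t → 0 ≤ PMwj t := by
  constructor
  · rw [PMwj, deriv_besselI0, besselI0_eq_F0]
    norm_num [F0_zero, F1_zero]
  · intro t ht
    have h1 : 1 ≤ hh (t/2) := by
      have h0 : hh 0 = 1 := by simp [hh, F0_zero, F1_zero]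
      rw [← h0]
      exact hh_mono (by linarith)
    have key : Real.exp (-t) * Real.exp (t/2) = Real.exp (-t/2) := by
      rw [← Real.exp_add]; ring_nf
    have hpos := Real.exp_pos (-t)
    rw [PMwj, deriv_besselI0, besselI0_eq_F0]
    rw [hh] at h1
    have h2 := mul_le_mul_of_nonneg_left h1 hpos.le
    rw [mul_one, ← mul_assoc, key] at h2
    linarith
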